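/- The orthogonal projection π_{N_E} of Q^I onto the incremental subspace N_E is given explicitly by (π_{N_E} x)(i) = Σ_{F⊂E} (-1)^{|E∖F|} x^+(i_F) / |I_{F^C}|, for all x ∈ Q^I, where the right-hand side depends only on i_E. -/

import Mathlib

open Finset

namespace Hier

variable {m : ℕ}

abbrev Cell (I : Fin m → ℕ) := ∀ j, Fin (I j)

variable (I : Fin m → ℕ)

/-- standard inner product on ℚ^I -/
def dot (x y : Cell I → ℚ) : ℚ := ∑ i, x i * y i

/-- L_E: tables depending only on the coordinates in E -/
def LL (E : Finset (Fin m)) : Submodule ℚ (Cell I → ℚ) where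
  carrier := {x | ∀ i i' : Cell I, (∀ j ∈ E, i j = i' j) → x i = x i'}
  zero_mem' := by intro i i' _; rfl
  add_mem' := by
    intro a b ha hb i i' h
    simp only [Pi.add_apply, ha i i' h, hb i i' h]
  smul_mem' := by
    intro c a ha i i' h
    simp only [Pi.smul_apply, ha i i' h]

/-- orthogonal complement w.r.t. the standard inner product -/
def perp (S : Submodule ℚ (Cell I → ℚ)) : Submodule ℚ (Cell I → ℚ) where
  carrier := {y | ∀ x ∈ S, dot I x y = 0}
  zero_mem' := by intro x hx; simp [dot]
  add_mem' := by
    intro a b ha hb x hx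
    have h1 := ha x hx
    have h2 := hb x hx
    simp only [dot, Pi.add_apply, mul_add, Finset.sum_add_distrib] at *
    rw [h1, h2]; ring
  smul_mem' := by
    intro c a ha x hx
    have h1 := ha x hx
    simp only [dot, Pi.smul_apply, smul_eq_mul] at *
    calc ∑ i, x i * (c * a i) = c * ∑ i, x i * a i := by
          rw [Finset.mul_sum]; congr 1; funext i; ring
      _ = 0 := by rw [h1]; ring

/-- incremental subspace N_E -/
def NN (E : Finset (Fin m)) : Submodule ℚ (Cell I → ℚ) :=
  LL I E ⊓ perp I (⨆ j ∈ E, LL I (E.erase j))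

/-- F-marginal of x evaluated at the marginal cell i_F -/
def marg (x : Cell I → ℚ) (F : Finset (Fin m)) (i : Cell I) : ℚ :=
  ∑ j : Cell I, if ∀ k ∈ F, j k = i k then x j else 0

/-- kernel of the configuration determined by a family of facets:
tables all of whose F-marginals vanish, F ∈ Fs -/
def kern (Fs : Finset (Finset (Fin m))) : Submodule ℚ (Cell I → ℚ) where
  carrier := {y | ∀ F ∈ Fs, ∀ i, marg I y F i = 0}
  zero_mem' := by intro F hF i; simp [marg]
  add_mem' := by
    intro a b ha hb F hF i
    have h1 := ha F hF i
    have h2 := hb F hF i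
    simp only [marg, Pi.add_apply] at *
    have key : (∑ j : Cell I, if ∀ k ∈ F, j k = i k then a j + b j else 0)
        = (∑ j : Cell I, if ∀ k ∈ F, j k = i k then a j else 0)
          + (∑ j : Cell I, if ∀ k ∈ F, j k = i k then b j else 0) := by
      rw [← Finset.sum_add_distrib]
      apply Finset.sum_congr rfl
      intro j _
      split <;> simp
    rw [key, h1, h2]; ring
  smul_mem' := by
    intro c a ha F hF i
    have h1 := ha F hF i
    simp only [marg, Pi.smul_apply, smul_eq_mul] at *
    calc ∑ j : Cell I, (if ∀ k ∈ F, j k = i k then c * a j else 0)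
        = c * ∑ j : Cell I, (if ∀ k ∈ F, j k = i k then a j else 0) := by
          rw [Finset.mul_sum]; congr 1; funext j; split <;> simp
      _ = 0 := by rw [h1]; ring

/-- a (finite) abstract simplicial complex on [m] -/
def IsComplex (Δ : Finset (Finset (Fin m))) : Prop :=
  ∀ F ∈ Δ, ∀ F' ⊆ F, F' ∈ Δ

/-- the maximal elements (facets) of Δ -/
def facets (Δ : Finset (Finset (Fin m))) : Finset (Finset (Fin m)) :=
  Δ.filter (fun D => ∀ F ∈ Δ, D ⊆ F → F = D)

/-- row space of the hierarchical-model configuration A_Δ -/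
def rowsp (Δ : Finset (Finset (Fin m))) : Submodule ℚ (Cell I → ℚ) :=
  ⨆ D ∈ facets Δ, LL I D

/-- single partial difference operator ∂_j -/
def pd1 (hI : ∀ j, 0 < I j) (j : Fin m) (x : Cell I → ℚ) : Cell I → ℚ :=
  fun i => x i - x (Function.update i j ⟨0, hI j⟩)

/-- ∂_E: composition of the (commuting) ∂_j, j ∈ E -/
noncomputable def pdE (hI : ∀ j, 0 < I j) (E : Finset (Fin m)) : (Cell I → ℚ) → (Cell I → ℚ) :=
  E.toList.foldr (fun j f => pd1 I hI j ∘ f) id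


lemma dot_comm (x y : Cell I → ℚ) : dot I x y = dot I y x :=
  Finset.sum_congr rfl fun i _ => mul_comm _ _

lemma marg_adj (x z : Cell I → ℚ) (F : Finset (Fin m)) :
    dot I (fun i => marg I x F i) z = dot I x (fun i => marg I z F i) := by
  unfold dot marg
  simp only [Finset.sum_mul, Finset.mul_sum]
  rw [Finset.sum_comm]
  refine Finset.sum_congr rfl fun j _ => Finset.sum_congr rfl fun i _ => ?_
  by_cases h : ∀ k ∈ F, i k = j k
  · rw [if_pos h, if_pos fun k hk => (h k hk).symm]
  · rw [if_neg h, if_neg fun h' => h fun k hk => (h' k hk).symm, zero_mul, mul_zero]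

lemma marg_mem_LL (x : Cell I → ℚ) (F : Finset (Fin m)) :
    (fun i => marg I x F i) ∈ LL I F := by
  intro i i' h
  refine Finset.sum_congr rfl fun j _ => ?_
  exact if_congr ⟨fun hc k hk => (hc k hk).trans (h k hk),
    fun hc k hk => (hc k hk).trans (h k hk).symm⟩ rfl rfl

lemma LL_mono {F E : Finset (Fin m)} (h : F ⊆ E) : LL I F ≤ LL I E :=
  fun _ hx i i' hii => hx i i' fun j hj => hii j (h hj)

lemma marg_erase {G F : Finset (Fin m)} {j : Fin m} (hjF : j ∈ F) (hjG : j ∉ G)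
    {z : Cell I → ℚ} (hz : z ∈ LL I G) (i : Cell I) :
    marg I z (F.erase j) i = (I j : ℚ) * marg I z F i := by
  classical
  set e := Equiv.piSplitAt j (fun l => Fin (I l)) with he
  have h1 : ∀ (v : Fin (I j)) w, e.symm (v, w) j = v := by
    intro v w; simp [he, Equiv.piSplitAt]
  have h2 : ∀ (v : Fin (I j)) w (l : Fin m) (hl : l ≠ j), e.symm (v, w) l = w ⟨l, hl⟩ := by
    intro v w l hl; simp [he, Equiv.piSplitAt, hl]
  have h3 : ∀ (v v' : Fin (I j)) w, z (e.symm (v, w)) = z (e.symm (v', w)) := by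
    intro v v' w
    refine hz _ _ fun l hl => ?_
    have hlj : l ≠ j := fun h => hjG (h ▸ hl)
    rw [h2 _ _ _ hlj, h2 _ _ _ hlj]
  set g : (∀ l : {l : Fin m // l ≠ j}, Fin (I l)) → ℚ :=
    fun w => if ∀ l ∈ F.erase j, e.symm (i j, w) l = i l then z (e.symm (i j, w)) else 0 with hg
  have hcondE : ∀ (v : Fin (I j)) w,
      (∀ l ∈ F.erase j, e.symm (v, w) l = i l) ↔ (∀ l ∈ F.erase j, e.symm (i j, w) l = i l) := by
    intro v w
    constructor <;> intro hc l hl <;>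
    · have hlj : l ≠ j := Finset.ne_of_mem_erase hl
      rw [h2 _ _ _ hlj]
      have := hc l hl
      rwa [h2 _ _ _ hlj] at this
  have claimA : ∀ (v : Fin (I j)) w,
      (if ∀ l ∈ F.erase j, e.symm (v, w) l = i l then z (e.symm (v, w)) else 0) = g w := by
    intro v w
    rw [hg]
    exact if_congr (hcondE v w) (h3 v (i j) w) rfl
  have claimB : ∀ (v : Fin (I j)) w,
      (if ∀ l ∈ F, e.symm (v, w) l = i l then z (e.symm (v, w)) else 0)
        = if v = i j then g w else 0 := by
    intro v w
    have hiff : (∀ l ∈ F, e.symm (v, w) l = i l)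
        ↔ (v = i j ∧ ∀ l ∈ F.erase j, e.symm (v, w) l = i l) := by
      constructor
      · intro hc
        refine ⟨by rw [← h1 v w]; exact hc j hjF, fun l hl => hc l (Finset.mem_of_mem_erase hl)⟩
      · rintro ⟨hv, hc⟩ l hl
        by_cases hlj : l = j
        · subst hlj; rw [h1]; exact hv
        · exact hc l (Finset.mem_erase.mpr ⟨hlj, hl⟩)
    by_cases hv : v = i j
    · subst hv
      rw [if_pos rfl, hg]
      refine if_congr ?_ rfl rfl
      constructor
      · intro hc l hl
        exact hc l (Finset.mem_of_mem_erase hl)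
      · intro hc l hl
        by_cases hlj : l = j
        · subst hlj; rw [h1]
        · exact hc l (Finset.mem_erase.mpr ⟨hlj, hl⟩)
    · rw [if_neg hv, if_neg (fun hc => hv (hiff.mp hc).1)]
  have hsplit : ∀ (c : Cell I → ℚ), (∑ k, c k) = ∑ v : Fin (I j), ∑ w, c (e.symm (v, w)) := by
    intro c
    rw [← Equiv.sum_comp e.symm c, Fintype.sum_prod_type]
  have hF : marg I z F i = ∑ w, g w := by
    rw [marg, hsplit]
    rw [Finset.sum_comm]
    refine (Finset.sum_congr rfl fun w _ => ?_).trans (Finset.sum_congr rfl fun w _ => rfl)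
    calc (∑ v : Fin (I j), if ∀ l ∈ F, e.symm (v, w) l = i l then z (e.symm (v, w)) else 0)
        = ∑ v : Fin (I j), if v = i j then g w else 0 :=
          Finset.sum_congr rfl fun v _ => claimB v w
      _ = g w := by rw [Finset.sum_ite_eq' Finset.univ (i j) (fun _ => g w)]; simp
  have hFe : marg I z (F.erase j) i = (I j : ℚ) * ∑ w, g w := by
    rw [marg, hsplit]
    have : ∀ v : Fin (I j),
        (∑ w, if ∀ l ∈ F.erase j, e.symm (v, w) l = i l then z (e.symm (v, w)) else 0)
          = ∑ w, g w := fun v => Finset.sum_congr rfl fun w _ => claimA v w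
    rw [Finset.sum_congr rfl fun v _ => this v, Finset.sum_const, Finset.card_univ,
      Fintype.card_fin, nsmul_eq_mul]
  rw [hF, hFe]

lemma marg_self {G : Finset (Fin m)} {w : Cell I → ℚ} (hw : w ∈ LL I G) (i : Cell I) :
    marg I w G i = (∏ j ∈ Gᶜ, (I j : ℚ)) * w i := by
  classical
  have aux : ∀ s : Finset (Fin m), s ⊆ Gᶜ → ∀ i : Cell I,
      marg I w sᶜ i = (∏ j ∈ s, (I j : ℚ)) * w i := by
    intro s
    induction s using Finset.induction_on with
    | empty =>
      intro _ i
      rw [Finset.compl_empty, Finset.prod_empty, one_mul, marg]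
      have : ∀ k : Cell I, (if ∀ l ∈ (Finset.univ : Finset (Fin m)), k l = i l then w k else 0)
          = if k = i then w k else 0 := by
        intro k
        exact if_congr ⟨fun h => funext fun l => h l (Finset.mem_univ l),
          fun h l _ => congrFun h l⟩ rfl rfl
      rw [Finset.sum_congr rfl fun k _ => this k, Finset.sum_ite_eq' Finset.univ i w]
      simp
    | @insert j s hjs ih =>
      intro hsub i
      have hjG : j ∉ G := by
        have : j ∈ Gᶜ := hsub (Finset.mem_insert_self j s)
        simpa using this
      have hjs' : j ∈ sᶜ := by simpa using hjs
      rw [Finset.compl_insert, marg_erase I hjs' hjG hw,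
        ih (fun l hl => hsub (Finset.mem_insert_of_mem hl)) i,
        Finset.prod_insert hjs]
      ring
  have := aux Gᶜ (subset_refl _) i
  rwa [compl_compl] at this

lemma pair_cancel (hI : ∀ j, 2 ≤ I j) {E : Finset (Fin m)} {j : Fin m} (hjE : j ∈ E)
    {w : Cell I → ℚ} (hw : w ∈ LL I (E.erase j)) (i : Cell I) :
    ∑ F ∈ E.powerset, (-1 : ℚ) ^ (E \ F).card / (∏ l ∈ Fᶜ, (I l : ℚ)) * marg I w F i = 0 := by
  classical
  set f : Finset (Fin m) → ℚ :=
    fun F => (-1 : ℚ) ^ (E \ F).card / (∏ l ∈ Fᶜ, (I l : ℚ)) * marg I w F i with hf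
  have hd : (I j : ℚ) ≠ 0 := by
    have := hI j; positivity
  have hcne : ∀ F : Finset (Fin m), (∏ l ∈ Fᶜ, (I l : ℚ)) ≠ 0 := by
    intro F
    refine Finset.prod_ne_zero_iff.mpr fun l _ => ?_
    have := hI l; positivity
  have hstep : ∀ F ⊆ E, j ∉ F → f (insert j F) + f F = 0 := by
    intro F hFE hjF
    have hmarg : marg I w F i = (I j : ℚ) * marg I w (insert j F) i := by
      have := marg_erase I (Finset.mem_insert_self j F) (Finset.notMem_erase j E) hw i
      rwa [Finset.erase_insert hjF] at this
    have hcard : (E \ F).card = (E \ insert j F).card + 1 := by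
      have h1 : insert j (E \ insert j F) = E \ F := by
        ext l
        simp only [Finset.mem_insert, Finset.mem_sdiff, Finset.mem_insert, not_or]
        constructor
        · rintro (rfl | ⟨hlE, _, hlF⟩)
          · exact ⟨hjE, hjF⟩
          · exact ⟨hlE, hlF⟩
        · rintro ⟨hlE, hlF⟩
          by_cases hlj : l = j
          · exact Or.inl hlj
          · exact Or.inr ⟨hlE, hlj, hlF⟩
      rw [← h1, Finset.card_insert_of_notMem (by simp)]
    have hprod : (∏ l ∈ Fᶜ, (I l : ℚ)) = (I j : ℚ) * ∏ l ∈ (insert j F)ᶜ, (I l : ℚ) := by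
      have h1 : insert j ((insert j F)ᶜ) = Fᶜ := by
        rw [Finset.compl_insert, Finset.insert_erase (by simpa using hjF)]
      rw [← h1, Finset.prod_insert (by rw [Finset.compl_insert]; exact Finset.notMem_erase j _)]
    have hPne : (∏ l ∈ (insert j F)ᶜ, (I l : ℚ)) ≠ 0 := hcne _
    rw [hf]
    simp only [hmarg, hcard, hprod, pow_succ]
    field_simp
    ring
  refine Finset.sum_involution
    (fun F _ => if j ∈ F then F.erase j else insert j F) ?_ ?_ ?_ ?_
  · intro F hF
    by_cases hjF : j ∈ F
    · simp only [if_pos hjF]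
      have h := hstep (F.erase j) (fun l hl => (Finset.mem_powerset.mp hF) (Finset.mem_of_mem_erase hl))
        (Finset.notMem_erase j F)
      rw [Finset.insert_erase hjF] at h
      exact h
    · simp only [if_neg hjF]
      rw [add_comm]
      exact hstep F (Finset.mem_powerset.mp hF) hjF
  · intro F hF _
    by_cases hjF : j ∈ F
    · simp only [if_pos hjF]
      intro h
      rw [← h] at hjF
      exact Finset.notMem_erase j F hjF
    · simp only [if_neg hjF]
      intro h
      exact hjF (by rw [← h]; exact Finset.mem_insert_self j F)
  · intro F hF
    by_cases hjF : j ∈ F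
    · simp only [if_pos hjF]
      exact Finset.mem_powerset.mpr fun l hl => (Finset.mem_powerset.mp hF) (Finset.mem_of_mem_erase hl)
    · simp only [if_neg hjF]
      exact Finset.mem_powerset.mpr (Finset.insert_subset hjE (Finset.mem_powerset.mp hF))
  · intro F hF
    by_cases hjF : j ∈ F
    · simp only [if_pos hjF, if_neg (Finset.notMem_erase j F)]
      exact Finset.insert_erase hjF
    · simp only [if_neg hjF, if_pos (Finset.mem_insert_self j F)]
      exact Finset.erase_insert hjF

def dotL (y : Cell I → ℚ) : (Cell I → ℚ) →ₗ[ℚ] ℚ where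
  toFun u := dot I u y
  map_add' a b := by
    unfold dot
    rw [← Finset.sum_add_distrib]
    exact Finset.sum_congr rfl fun i _ => by simp [add_mul]
  map_smul' r a := by
    unfold dot
    simp only [Pi.smul_apply, smul_eq_mul, RingHom.id_apply, Finset.mul_sum]
    exact Finset.sum_congr rfl fun i _ => by ring

lemma perp_mem_of_le {S : Submodule ℚ (Cell I → ℚ)} {y : Cell I → ℚ}
    (h : S ≤ LinearMap.ker (dotL I y)) : y ∈ perp I S :=
  fun u hu => LinearMap.mem_ker.mp (h hu)

/-- Lemma 2 (5): explicit formula for the orthogonal projection onto `N_E`: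
`(π_{N_E} x)(i) = Σ_{F⊆E} (-1)^{|E∖F|} x⁺(i_F) / |I_{F^C}|`; the displayed table lies in
`N_E` and `x` minus it is orthogonal to `N_E`. -/
theorem stmt8 (hI : ∀ j, 2 ≤ I j) (E : Finset (Fin m)) (x : Cell I → ℚ) :
    (fun i : Cell I => ∑ F ∈ E.powerset,
        (-1 : ℚ) ^ (E \ F).card / (∏ j ∈ Fᶜ, (I j : ℚ)) * marg I x F i) ∈ NN I E ∧
    (∀ z ∈ NN I E,
      dot I (x - fun i : Cell I => ∑ F ∈ E.powerset,
        (-1 : ℚ) ^ (E \ F).card / (∏ j ∈ Fᶜ, (I j : ℚ)) * marg I x F i) z = 0) := by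
  classical
  have hcne : ∀ F : Finset (Fin m), (∏ l ∈ Fᶜ, (I l : ℚ)) ≠ 0 := by
    intro F
    refine Finset.prod_ne_zero_iff.mpr fun l _ => ?_
    have := hI l; positivity
  -- key orthogonality computation
  have main2 : ∀ j ∈ E, ∀ u ∈ LL I (E.erase j),
      dot I u (fun i : Cell I => ∑ F ∈ E.powerset,
        (-1 : ℚ) ^ (E \ F).card / (∏ l ∈ Fᶜ, (I l : ℚ)) * marg I x F i) = 0 := by
    intro j hj u hu
    unfold dot
    simp only [Finset.mul_sum]
    rw [Finset.sum_comm]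
    have h1 : ∀ F ∈ E.powerset,
        (∑ i, u i * ((-1 : ℚ) ^ (E \ F).card / (∏ l ∈ Fᶜ, (I l : ℚ)) * marg I x F i))
          = ∑ i, (-1 : ℚ) ^ (E \ F).card / (∏ l ∈ Fᶜ, (I l : ℚ)) * (x i * marg I u F i) := by
      intro F _
      have h2 : (∑ i, marg I x F i * u i) = ∑ i, x i * marg I u F i := marg_adj I x u F
      rw [← Finset.mul_sum, ← h2, Finset.mul_sum]
      exact Finset.sum_congr rfl fun i _ => by ring
    rw [Finset.sum_congr rfl h1, Finset.sum_comm]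
    refine Finset.sum_eq_zero fun i _ => ?_
    have hpc := pair_cancel I hI hj hu i
    calc (∑ F ∈ E.powerset, (-1 : ℚ) ^ (E \ F).card / (∏ l ∈ Fᶜ, (I l : ℚ)) * (x i * marg I u F i))
        = x i * ∑ F ∈ E.powerset, (-1 : ℚ) ^ (E \ F).card / (∏ l ∈ Fᶜ, (I l : ℚ)) * marg I u F i := by
          rw [Finset.mul_sum]
          exact Finset.sum_congr rfl fun F _ => by ring
      _ = 0 := by rw [hpc, mul_zero]
  constructor
  · refine Submodule.mem_inf.mpr ⟨?_, ?_⟩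
    · -- lies in L_E
      intro i i' h
      refine Finset.sum_congr rfl fun F hF => ?_
      exact congrArg (fun t => (-1 : ℚ) ^ (E \ F).card / (∏ l ∈ Fᶜ, (I l : ℚ)) * t)
        ((LL_mono I (Finset.mem_powerset.mp hF) (marg_mem_LL I x F)) i i' h)
    · -- orthogonal to the lower faces
      refine perp_mem_of_le I ?_
      refine iSup_le fun j => iSup_le fun hj => fun u hu => LinearMap.mem_ker.mpr ?_
      exact main2 j hj u hu
  · intro z hz
    obtain ⟨hzL, hzP⟩ := Submodule.mem_inf.mp hz
    have hmargz : ∀ F ∈ E.powerset, F ≠ E → ∀ i, marg I z F i = 0 := by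
      intro F hF hne
      have hFE := Finset.mem_powerset.mp hF
      obtain ⟨j, hjE, hjF⟩ := Finset.exists_of_ssubset (hFE.ssubset_of_ne hne)
      have huF : (fun i => marg I z F i) ∈ LL I F := marg_mem_LL I z F
      have husup : (fun i => marg I z F i) ∈ ⨆ j ∈ E, LL I (E.erase j) :=
        Submodule.mem_iSup_of_mem j (Submodule.mem_iSup_of_mem hjE
          (LL_mono I (Finset.subset_erase.mpr ⟨hFE, hjF⟩) huF))
      have hdz : (∑ i, marg I z F i * z i) = 0 := hzP _ husup
      have hself : (∑ i, marg I z F i * marg I z F i) = 0 := by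
        have h1 : (∑ i, marg I z F i * marg I z F i)
            = ∑ i, z i * marg I (fun i' => marg I z F i') F i := marg_adj I z _ F
        rw [h1]
        have h2 : ∀ i, marg I (fun i' => marg I z F i') F i
            = (∏ l ∈ Fᶜ, (I l : ℚ)) * marg I z F i := fun i => marg_self I huF i
        calc (∑ i, z i * marg I (fun i' => marg I z F i') F i)
            = (∏ l ∈ Fᶜ, (I l : ℚ)) * ∑ i, marg I z F i * z i := by
              rw [Finset.mul_sum]
              exact Finset.sum_congr rfl fun i _ => by rw [h2 i]; ring
          _ = 0 := by rw [hdz, mul_zero]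
      intro i
      have hnn : ∀ k ∈ (Finset.univ : Finset (Cell I)), 0 ≤ marg I z F k * marg I z F k :=
        fun k _ => mul_self_nonneg _
      exact mul_self_eq_zero.mp
        ((Finset.sum_eq_zero_iff_of_nonneg hnn).mp hself i (Finset.mem_univ i))
    unfold dot
    have hsplit : (∑ i, ((x - fun i : Cell I => ∑ F ∈ E.powerset,
          (-1 : ℚ) ^ (E \ F).card / (∏ l ∈ Fᶜ, (I l : ℚ)) * marg I x F i) i) * z i)
        = (∑ i, x i * z i) - ∑ i, (∑ F ∈ E.powerset,
          (-1 : ℚ) ^ (E \ F).card / (∏ l ∈ Fᶜ, (I l : ℚ)) * marg I x F i) * z i := by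
      rw [← Finset.sum_sub_distrib]
      exact Finset.sum_congr rfl fun i _ => by simp [Pi.sub_apply]; ring
    rw [hsplit]
    have hyz : (∑ i, (∑ F ∈ E.powerset,
          (-1 : ℚ) ^ (E \ F).card / (∏ l ∈ Fᶜ, (I l : ℚ)) * marg I x F i) * z i)
        = ∑ i, x i * z i := by
      have h0 : (∑ i, (∑ F ∈ E.powerset,
            (-1 : ℚ) ^ (E \ F).card / (∏ l ∈ Fᶜ, (I l : ℚ)) * marg I x F i) * z i)
          = ∑ F ∈ E.powerset, (-1 : ℚ) ^ (E \ F).card / (∏ l ∈ Fᶜ, (I l : ℚ))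
              * ∑ i, x i * marg I z F i := by
        simp only [Finset.sum_mul]
        rw [Finset.sum_comm]
        refine Finset.sum_congr rfl fun F _ => ?_
        have h2 : (∑ i, marg I x F i * z i) = ∑ i, x i * marg I z F i := marg_adj I x z F
        rw [← h2, Finset.mul_sum]
        exact Finset.sum_congr rfl fun i _ => by ring
      rw [h0]
      rw [Finset.sum_eq_single_of_mem E (Finset.mem_powerset_self E) ?side]
      case side =>
        intro F hF hne
        have : (∑ i, x i * marg I z F i) = 0 :=
          Finset.sum_eq_zero fun i _ => by rw [hmargz F hF hne i, mul_zero]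
        rw [this, mul_zero]
      have hE : ∀ i, marg I z E i = (∏ l ∈ Eᶜ, (I l : ℚ)) * z i := fun i => marg_self I hzL i
      have hsum : (∑ i, x i * marg I z E i) = (∏ l ∈ Eᶜ, (I l : ℚ)) * ∑ i, x i * z i := by
        rw [Finset.mul_sum]
        exact Finset.sum_congr rfl fun i _ => by rw [hE i]; ring
      rw [hsum, Finset.sdiff_self, Finset.card_empty, pow_zero, one_div,
        inv_mul_cancel_left₀ (hcne E)]
    rw [hyz, sub_self]

end Hier
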